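/- arXiv:1908.01026 — 2 statements merged into one kernel-verified Lean document; each statement's English description precedes it below -/
import Mathlib

section
/- For all d ≥ 1 and n ≥ 1, s(d, 2n+1) = x^{2n-d} q^{2n² - 2dn + d² + 3n} · C(n-1, 2n-d)_{q²}, where C(A,B)_{q²} is the Gaussian binomial coefficient in q². -/
/-- A Euclidean billiard partition: a strictly decreasing list of positive
integers, whose smallest (last) part is even, and in which no two adjacent
parts are both odd. -/
def EBP (L : List ℕ) : Prop :=
  L ≠ [] ∧ (∀ m ∈ L, 0 < m) ∧ L.Chain' (· > ·) ∧
    Even (L.getLastD 1) ∧ L.Chain' fun a b => ¬(Odd a ∧ Odd b)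


/-- An irreducible Euclidean billiard partition: additionally the smallest
part equals 2 and adjacent parts differ by at most 2. -/
def IrrEBP (L : List ℕ) : Prop :=
  EBP L ∧ L.getLastD 1 = 2 ∧ L.Chain' fun a b => a ≤ b + 2

/-- The number of odd parts of a list. -/
def oddCount (L : List ℕ) : ℕ := (L.filter fun m => m % 2 = 1).length

/-- The weight exponent: `d - 1 - 2s` if the largest part is even and
`d - 2s` if it is odd, where `d` is the number of parts and `s` the number
of odd parts. -/
def wt (L : List ℕ) : ℕ :=
  if L.headD 0 % 2 = 0 then L.length - 1 - 2 * oddCount L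
  else L.length - 2 * oddCount L

/-- The generating polynomial `s(d, N) = Σ_π x^{wt π} q^{|π|}` over irreducible
Euclidean billiard partitions with `d` parts and largest part `N`, where
`x = X 0` and `q = X 1`. -/
noncomputable def sPoly (d N : ℕ) : MvPolynomial (Fin 2) ℤ :=
  ∑ᶠ L ∈ {L : List ℕ | IrrEBP L ∧ L.length = d ∧ L.headD 0 = N},
    MvPolynomial.X 0 ^ wt L * MvPolynomial.X 1 ^ L.sum

/-- The Gaussian binomial coefficient `[a choose b]_t`, defined via the
`q`-Pascal recurrence `[a+1, b+1]_t = [a, b]_t + t^{b+1} [a, b+1]_t`. -/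
def gbinom {R : Type*} [CommRing R] (t : R) : ℕ → ℕ → R
  | _, 0 => 1
  | 0, _ + 1 => 0
  | a + 1, b + 1 => gbinom t a b + t ^ (b + 1) * gbinom t a (b + 1)

/-- The Gaussian binomial with an integer lower index, equal to `0` when the
lower index is negative. -/
def gbinomZ {R : Type*} [CommRing R] (t : R) (a : ℕ) (b : ℤ) : R :=
  if 0 ≤ b then gbinom t a b.toNat else 0

/-- blocks j, j-1, ..., 1 : block j = [2j+1, 2j] if j ∈ S else [2j]. -/
def body (S : Finset ℕ) : ℕ → List ℕ
  | 0 => []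
  | (j+1) => (if (j+1) ∈ S then [2*(j+1)+1, 2*(j+1)] else [2*(j+1)]) ++ body S j

lemma body_ne_nil (S : Finset ℕ) (j : ℕ) (hj : 1 ≤ j) : body S j ≠ [] := by
  cases j with
  | zero => omega
  | succ j => show (if _ then _ else _) ++ _ ≠ []; split <;> simp

lemma body_headD (S : Finset ℕ) (j : ℕ) (hj : 1 ≤ j) :
    (body S j).headD 0 = if j ∈ S then 2*j+1 else 2*j := by
  cases j with
  | zero => omega
  | succ j => rw [body]; split <;> rfl

lemma body_pos (S : Finset ℕ) (j : ℕ) : ∀ m ∈ body S j, 0 < m := by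
  induction j with
  | zero => simp [body]
  | succ j ih =>
    intro m hm
    rw [body, List.mem_append] at hm
    rcases hm with hm | hm
    · split at hm <;> simp at hm <;> omega
    · exact ih m hm

lemma body_length (S : Finset ℕ) (j : ℕ) :
    (body S j).length = j + ((Finset.Icc 1 j).filter (· ∈ S)).card := by
  induction j with
  | zero => simp [body]
  | succ j ih =>
    have hicc : Finset.Icc 1 (j+1) = insert (j+1) (Finset.Icc 1 j) := by
      ext x; simp [Finset.mem_Icc]; omega
    have hnm : (j+1) ∉ Finset.Icc 1 j := by simp
    rw [body, List.length_append, ih, hicc, Finset.filter_insert]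
    split <;> simp [Finset.card_insert_of_notMem (fun h => hnm (Finset.mem_of_mem_filter _ h))] <;> omega

lemma body_sum (S : Finset ℕ) (j : ℕ) :
    (body S j).sum = j*(j+1) + ∑ i ∈ (Finset.Icc 1 j).filter (· ∈ S), (2*i+1) := by
  induction j with
  | zero => simp [body]
  | succ j ih =>
    have hicc : Finset.Icc 1 (j+1) = insert (j+1) (Finset.Icc 1 j) := by
      ext x; simp [Finset.mem_Icc]; omega
    have hnm : (j+1) ∉ Finset.Icc 1 j := by simp
    rw [body, List.sum_append, ih, hicc, Finset.filter_insert]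
    split
    · rw [Finset.sum_insert (fun h => hnm (Finset.mem_of_mem_filter _ h))]
      simp; ring
    · simp; ring

lemma body_oddCount (S : Finset ℕ) (j : ℕ) :
    oddCount (body S j) = ((Finset.Icc 1 j).filter (· ∈ S)).card := by
  induction j with
  | zero => simp [body, oddCount]
  | succ j ih =>
    have hicc : Finset.Icc 1 (j+1) = insert (j+1) (Finset.Icc 1 j) := by
      ext x; simp [Finset.mem_Icc]; omega
    have hnm : (j+1) ∉ Finset.Icc 1 j := by simp
    rw [oddCount, body, List.filter_append, List.length_append,
      show (List.filter (fun m => decide (m % 2 = 1)) (body S j)).length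
        = oddCount (body S j) from rfl, ih, hicc, Finset.filter_insert]
    have h1 : (2*(j+1)+1) % 2 = 1 := by omega
    have h2 : (2*(j+1)) % 2 = 0 := by omega
    split
    · rw [Finset.card_insert_of_notMem (fun h => hnm (Finset.mem_of_mem_filter _ h))]
      simp [List.filter_cons, h1, h2, Nat.add_comm]
    · simp [List.filter_cons, h2]

lemma body_getLastD (S : Finset ℕ) (j : ℕ) (hj : 1 ≤ j) (d : ℕ) :
    (body S j).getLastD d = 2 := by
  induction j with
  | zero => omega
  | succ j ih =>
    rw [body]
    cases j with
    | zero =>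
      simp only [body, List.append_nil]
      split <;> rfl
    | succ i =>
      rw [List.getLastD_eq_getLast?, List.getLast?_append_of_ne_nil _ (body_ne_nil S _ (by omega)),
        ← List.getLastD_eq_getLast?]
      exact ih (by omega)

lemma body_chain_gt (S : Finset ℕ) (j : ℕ) : ∀ a, 2*j < a → (j ∈ S → 2*j+1 < a) →
    List.Chain (· > ·) a (body S j) := by
  induction j with
  | zero => intro a _ _; simp [body]; exact List.Chain.nil
  | succ j ih =>
    intro a ha ha'
    rw [body]
    split
    · rename_i hmem
      have := ha' hmem
      exact List.Chain.cons (by omega) (List.Chain.cons (by omega)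
        (ih _ (by omega) (fun _ => by omega)))
    · exact List.Chain.cons (by omega) (ih _ (by omega) (fun _ => by omega))

lemma body_chain_diff (S : Finset ℕ) (j : ℕ) : ∀ a, a ≤ 2*j+2 →
    List.Chain (fun a b => a ≤ b + 2) a (body S j) := by
  induction j with
  | zero => intro a _; simp [body]; exact List.Chain.nil
  | succ j ih =>
    intro a ha
    rw [body]
    split
    · exact List.Chain.cons (by omega) (List.Chain.cons (by omega) (ih _ (by omega)))
    · exact List.Chain.cons (by omega) (ih _ (by omega))

lemma body_chain_parity (S : Finset ℕ) (j : ℕ) : ∀ a, (Even a ∨ j ∉ S) →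
    List.Chain (fun a b => ¬(Odd a ∧ Odd b)) a (body S j) := by
  induction j with
  | zero => intro a _; simp [body]; exact List.Chain.nil
  | succ j ih =>
    intro a ha
    rw [body]
    split
    · rename_i hmem
      have hea : Even a := ha.resolve_right (fun h => h hmem)
      refine List.Chain.cons (fun h => ?_) (List.Chain.cons (fun h => ?_) (ih _ (Or.inl ⟨j+1, by ring⟩)))
      · exact (Nat.not_odd_iff_even.mpr hea) h.1
      · exact (Nat.not_odd_iff_even.mpr ⟨j+1, by ring⟩) h.2
    · refine List.Chain.cons (fun h => ?_) (ih _ (Or.inl ⟨j+1, by ring⟩))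
      exact (Nat.not_odd_iff_even.mpr ⟨j+1, by ring⟩) h.2

lemma mem_body_odd (S : Finset ℕ) (j i : ℕ) (hi : 1 ≤ i) :
    (2*i+1) ∈ body S j ↔ (i ∈ S ∧ i ≤ j) := by
  induction j with
  | zero => simp [body]; omega
  | succ j ih =>
    rw [body, List.mem_append, ih]
    split
    · rename_i hmem
      simp only [List.mem_cons, List.mem_singleton, List.not_mem_nil, or_false]
      constructor
      · rintro ((h | h) | ⟨h1, h2⟩)
        · have hij : i = j+1 := by omega
          exact ⟨hij ▸ hmem, by omega⟩
        · omega
        · exact ⟨h1, by omega⟩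
      · rintro ⟨h1, h2⟩
        rcases Nat.lt_or_ge i (j+1) with h | h
        · exact Or.inr ⟨h1, by omega⟩
        · exact Or.inl (Or.inl (by omega))
    · rename_i hmem
      simp only [List.mem_singleton, List.not_mem_nil, or_false, List.mem_cons]
      constructor
      · rintro (h | ⟨h1, h2⟩)
        · omega
        · exact ⟨h1, by omega⟩
      · rintro ⟨h1, h2⟩
        have : i ≠ j+1 := fun hc => hmem (hc ▸ h1)
        exact Or.inr ⟨h1, by omega⟩

lemma body_succ_mem (S : Finset ℕ) (j : ℕ) (h : j+1 ∈ S) :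
    body S (j+1) = (2*(j+1)+1) :: (2*(j+1)) :: body S j := by
  rw [body, if_pos h]
  rfl

lemma body_succ_not_mem (S : Finset ℕ) (j : ℕ) (h : j+1 ∉ S) :
    body S (j+1) = (2*(j+1)) :: body S j := by
  rw [body, if_neg h]
  rfl

lemma body_insert_gt (S : Finset ℕ) (i : ℕ) : ∀ j, j < i → body (insert i S) j = body S j := by
  intro j
  induction j with
  | zero => intro _; rfl
  | succ j ih =>
    intro hj
    by_cases h : j+1 ∈ S
    · rw [body_succ_mem _ _ h, body_succ_mem _ _ (Finset.mem_insert_of_mem h), ih (by omega)]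
    · rw [body_succ_not_mem _ _ h, body_succ_not_mem _ _ (fun hc => by
        rcases Finset.mem_insert.mp hc with hc | hc
        · omega
        · exact h hc), ih (by omega)]

lemma getLastD_tail {a : ℕ} {P : List ℕ} (h : P ≠ []) (hl : (a :: P).getLastD 1 = 2) :
    P.getLastD 1 = 2 := by
  cases P with
  | nil => exact absurd rfl h
  | cons p Q =>
    rw [List.getLastD_cons, List.getLastD_cons] at hl
    rw [List.getLastD_cons]
    exact hl

lemma evenClass : ∀ (m : ℕ) (M : List ℕ), (∀ x ∈ M, 0 < x) → M.Chain' (· > ·) →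
    M.getLastD 1 = 2 → M.Chain' (fun a b => ¬(Odd a ∧ Odd b)) →
    M.Chain' (fun a b => a ≤ b + 2) →
    M.headD 0 = 2*(m+1) → ∃ S ⊆ Finset.Icc 1 m, M = body S (m+1) := by
  intro m
  induction m with
  | zero =>
    rintro (_ | ⟨a, P⟩) hpos hgt hlast hpar hdiff hhead
    · simp at hhead
    · simp only [List.headD_cons] at hhead
      subst hhead
      rcases P with _ | ⟨p, Q⟩
      · exact ⟨∅, by simp, rfl⟩
      · exfalso
        have hp2 : p < 2 * (0+1) := (List.isChain_cons_cons.mp hgt).1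
        have hppos : 0 < p := hpos p (by simp)
        have hp1 : p = 1 := by omega
        subst hp1
        rcases Q with _ | ⟨q, R⟩
        · rw [List.getLastD_cons, List.getLastD_cons, List.getLastD_nil] at hlast
          omega
        · have hq : q < 1 := (List.isChain_cons_cons.mp hgt.tail).1
          have := hpos q (by simp)
          omega
  | succ m ih =>
    rintro (_ | ⟨a, P⟩) hpos hgt hlast hpar hdiff hhead
    · simp at hhead
    · simp only [List.headD_cons] at hhead
      subst hhead
      rcases P with _ | ⟨p, Q⟩
      · rw [List.getLastD_cons, List.getLastD_nil] at hlast; omega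
      · have h1 : p < 2*(m+1+1) := (List.isChain_cons_cons.mp hgt).1
        have h2 : 2*(m+1+1) ≤ p + 2 := (List.isChain_cons_cons.mp hdiff).1
        have hlast' : (p :: Q).getLastD 1 = 2 := getLastD_tail (by simp) hlast
        rcases Nat.eq_or_lt_of_le h2 with hp | hp
        · -- p = 2*(m+1)
          have hp' : (p :: Q).headD 0 = 2*(m+1) := by simp only [List.headD_cons]; omega
          obtain ⟨S, hS, hPeq⟩ := ih (p :: Q) (fun x hx => hpos x (List.mem_cons_of_mem _ hx))
            hgt.tail hlast' hpar.tail hdiff.tail hp'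
          refine ⟨S, fun x hx => by have := hS hx; simp only [Finset.mem_Icc] at *; omega, ?_⟩
          have hm2 : m + 2 ∉ S := fun hc => by
            have := hS hc; simp only [Finset.mem_Icc] at this; omega
          rw [show m+1+1 = (m+1)+1 from rfl, body_succ_not_mem S (m+1) (by exact hm2), ← hPeq]
        · -- p = 2m+3, odd
          have hp' : p = 2*m+3 := by omega
          subst hp'
          rcases Q with _ | ⟨q, R⟩
          · rw [List.getLastD_cons, List.getLastD_nil] at hlast'; omega
          · have hq1 : q < 2*m+3 := (List.isChain_cons_cons.mp hgt.tail).1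
            have hq2 : 2*m+3 ≤ q + 2 := (List.isChain_cons_cons.mp hdiff.tail).1
            have hqpar : ¬(Odd (2*m+3) ∧ Odd q) := (List.isChain_cons_cons.mp hpar.tail).1
            have hq : q = 2*(m+1) := by
              rcases Nat.eq_or_lt_of_le hq2 with h | h
              · exact absurd ⟨⟨m+1, by omega⟩, ⟨m, by omega⟩⟩ hqpar
              · omega
            have hlast'' : (q :: R).getLastD 1 = 2 := getLastD_tail (by simp) hlast'
            obtain ⟨S, hS, hQeq⟩ := ih (q :: R)
              (fun x hx => hpos x (List.mem_cons_of_mem _ (List.mem_cons_of_mem _ hx)))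
              hgt.tail.tail hlast'' hpar.tail.tail hdiff.tail.tail
              (by simp only [List.headD_cons]; omega)
            have hm1S : m + 1 ∉ S := fun hc => by
              have := hS hc; simp only [Finset.mem_Icc] at this; omega
            refine ⟨insert (m+1) S, fun x hx => ?_, ?_⟩
            · rcases Finset.mem_insert.mp hx with h | h
              · simp only [Finset.mem_Icc]; omega
              · have := hS h; simp only [Finset.mem_Icc] at *; omega
            · have hm2ins : m+2 ∉ insert (m+1) S := fun hc => by
                rcases Finset.mem_insert.mp hc with h | h
                · omega
                · have := hS h; simp only [Finset.mem_Icc] at this; omega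
              rw [show m+1+1 = (m+1)+1 from rfl,
                body_succ_not_mem _ (m+1) hm2ins,
                body_succ_mem _ m (Finset.mem_insert_self _ _),
                body_insert_gt S (m+1) m (by omega)]
              have e3 : q :: R = 2*(m+1) :: body S m := by
                rw [hQeq, body_succ_not_mem S m hm1S]
              have h23 : (2*m+3) = 2*(m+1)+1 := by omega
              rw [h23, e3]

lemma oddClass (m : ℕ) (L : List ℕ) (hL : IrrEBP L) (hhead : L.headD 0 = 2*(m+1)+1) :
    ∃ S ⊆ Finset.Icc 1 m, L = (2*(m+1)+1) :: body S (m+1) := by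
  obtain ⟨⟨hne, hpos, hgt, _, hpar⟩, hlast, hdiff⟩ := hL
  rcases L with _ | ⟨a, P⟩
  · simp at hhead
  · simp only [List.headD_cons] at hhead
    subst hhead
    rcases P with _ | ⟨p, Q⟩
    · rw [List.getLastD_cons, List.getLastD_nil] at hlast; omega
    · have h1 : p < 2*(m+1)+1 := (List.isChain_cons_cons.mp hgt).1
      have h2 : 2*(m+1)+1 ≤ p + 2 := (List.isChain_cons_cons.mp hdiff).1
      have hppar : ¬(Odd (2*(m+1)+1) ∧ Odd p) := (List.isChain_cons_cons.mp hpar).1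
      have hp : p = 2*(m+1) := by
        rcases Nat.eq_or_lt_of_le h2 with h | h
        · exact absurd ⟨⟨m+1, by omega⟩, ⟨m, by omega⟩⟩ hppar
        · omega
      obtain ⟨S, hS, hPeq⟩ := evenClass m (p :: Q)
        (fun x hx => hpos x (List.mem_cons_of_mem _ hx))
        hgt.tail (getLastD_tail (by simp) hlast) hpar.tail hdiff.tail
        (by simp only [List.headD_cons]; omega)
      exact ⟨S, hS, by rw [← hPeq]⟩

lemma oL_IrrEBP (m : ℕ) (S : Finset ℕ) (hS : S ⊆ Finset.Icc 1 m) :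
    IrrEBP ((2*(m+1)+1) :: body S (m+1)) := by
  have hmem : (m+1) ∉ S := fun hc => by
    have := hS hc; simp only [Finset.mem_Icc] at this; omega
  have hlast : ((2*(m+1)+1) :: body S (m+1)).getLastD 1 = 2 := by
    rw [List.getLastD_cons]
    exact body_getLastD S (m+1) (by omega) _
  refine ⟨⟨by simp, ?_, ?_, ?_, ?_⟩, hlast, ?_⟩
  · intro x hx
    rcases List.mem_cons.mp hx with h | h
    · omega
    · exact body_pos S (m+1) x h
  · exact body_chain_gt S (m+1) _ (by omega) (fun hc => absurd hc hmem)
  · rw [hlast]; exact ⟨1, rfl⟩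
  · exact body_chain_parity S (m+1) _ (Or.inr hmem)
  · exact body_chain_diff S (m+1) _ (by omega)

lemma filter_eq_self (m : ℕ) (S : Finset ℕ) (hS : S ⊆ Finset.Icc 1 m) :
    (Finset.Icc 1 (m+1)).filter (· ∈ S) = S := by
  ext x
  simp only [Finset.mem_filter, Finset.mem_Icc]
  constructor
  · tauto
  · intro hx
    have := hS hx
    simp only [Finset.mem_Icc] at this
    exact ⟨⟨by omega, by omega⟩, hx⟩

lemma oddCount_cons_odd (n : ℕ) (l : List ℕ) : oddCount ((2*n+1) :: l) = 1 + oddCount l := by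
  have h : (2*n+1) % 2 = 1 := by omega
  simp [oddCount, List.filter_cons, h, Nat.add_comm]


lemma oL_length (m : ℕ) (S : Finset ℕ) (hS : S ⊆ Finset.Icc 1 m) :
    ((2*(m+1)+1) :: body S (m+1)).length = (m+2) + S.card := by
  rw [List.length_cons, body_length, filter_eq_self m S hS]
  omega

lemma oL_wt (m : ℕ) (S : Finset ℕ) (hS : S ⊆ Finset.Icc 1 m) :
    wt ((2*(m+1)+1) :: body S (m+1)) = m - S.card := by
  have hc : S.card ≤ m := by
    have := Finset.card_le_card hS
    simpa using this
  rw [wt, if_neg (by simp only [List.headD_cons]; omega)]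
  rw [oL_length m S hS, oddCount_cons_odd, body_oddCount, filter_eq_self m S hS]
  omega

lemma oL_sum (m : ℕ) (S : Finset ℕ) (hS : S ⊆ Finset.Icc 1 m) :
    ((2*(m+1)+1) :: body S (m+1)).sum
      = ((m+1)*(m+1) + 3*(m+1) + 1) + S.card + 2 * S.sum id := by
  rw [List.sum_cons, body_sum, filter_eq_self m S hS]
  have : ∑ i ∈ S, (2*i+1) = 2 * S.sum id + S.card := by
    rw [Finset.sum_add_distrib, ← Finset.mul_sum, Finset.sum_const, smul_eq_mul, mul_one]
    rfl
  rw [this]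
  ring

section GB
variable {R : Type*} [CommRing R] (t : R)

lemma gbinom_zero_right (a : ℕ) : gbinom t a 0 = 1 := by cases a <;> rfl

lemma gbinom_succ_succ (a b : ℕ) :
    gbinom t (a+1) (b+1) = gbinom t a b + t ^ (b + 1) * gbinom t a (b + 1) := rfl

lemma gbinom_eq_zero {a b : ℕ} (h : a < b) : gbinom t a b = 0 := by
  induction a generalizing b with
  | zero => cases b with
    | zero => omega
    | succ b => rfl
  | succ a ih =>
    cases b with
    | zero => omega
    | succ b =>
      rw [gbinom_succ_succ, ih (by omega), ih (by omega)]; ring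

lemma gbinom_self (a : ℕ) : gbinom t a a = 1 := by
  induction a with
  | zero => rfl
  | succ a ih =>
    rw [gbinom_succ_succ, ih, gbinom_eq_zero t (by omega)]; ring

lemma key_sum {m k : ℕ} (hk : k ≤ m) :
    ∑ S ∈ (Finset.Icc 1 m).powersetCard k, t ^ (S.sum id) =
      t ^ (k * (k+1) / 2) * gbinom t m (m - k) := by
  induction m generalizing k with
  | zero =>
    interval_cases k
    simp [gbinom_zero_right]
  | succ m ih =>
    have hins : Finset.Icc 1 (m+1) = insert (m+1) (Finset.Icc 1 m) := by
      ext x; simp [Finset.mem_Icc, Finset.mem_insert]; omega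
    have hnm : (m+1) ∉ Finset.Icc 1 m := by simp
    cases k with
    | zero => simp [gbinom_self]
    | succ k =>
      have hd : Disjoint ((Finset.Icc 1 m).powersetCard (k+1))
          (((Finset.Icc 1 m).powersetCard k).image (insert (m+1))) := by
        rw [Finset.disjoint_left]
        intro S hS hS'
        have h1 : (m+1) ∉ S := fun hc => hnm ((Finset.mem_powersetCard.mp hS).1 hc)
        obtain ⟨T, _, rfl⟩ := Finset.mem_image.mp hS'
        exact h1 (Finset.mem_insert_self _ _)
      rw [hins, Finset.powersetCard_succ_insert hnm, Finset.sum_union hd]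
      have himg : ∑ S ∈ ((Finset.Icc 1 m).powersetCard k).image (insert (m+1)),
          t ^ (S.sum id) =
          ∑ S ∈ (Finset.Icc 1 m).powersetCard k, t ^ (m + 1 + S.sum id) := by
        rw [Finset.sum_image]
        · apply Finset.sum_congr rfl
          intro S hS
          have hS' : (m+1) ∉ S := fun hc => hnm
            ((Finset.mem_powersetCard.mp hS).1 hc)
          rw [Finset.sum_insert hS']
          simp
        · intro S hS T hT h
          have hS' : (m+1) ∉ S := fun hc => hnm
            ((Finset.mem_powersetCard.mp hS).1 hc)
          have hT' : (m+1) ∉ T := fun hc => hnm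
            ((Finset.mem_powersetCard.mp hT).1 hc)
          rw [← Finset.erase_insert hS', ← Finset.erase_insert hT', h]
      rw [himg]
      have tri : (k+1)*((k+1)+1)/2 = k*(k+1)/2 + (k+1) := by
        obtain ⟨c, hc⟩ := Nat.even_mul_succ_self k
        have h : (k+1)*((k+1)+1) = k*(k+1)+2*(k+1) := by ring
        omega
      have hsum2 : ∑ S ∈ (Finset.Icc 1 m).powersetCard k, t ^ (m + 1 + S.sum id)
          = t ^ (m + 1 + k * (k+1) / 2) * gbinom t m (m - k) := by
        have hp : ∀ S : Finset ℕ, t ^ (m+1+S.sum id) = t^(m+1) * t^(S.sum id) :=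
          fun S => pow_add t _ _
        simp only [hp]
        rw [← Finset.mul_sum, ih (by omega), ← mul_assoc, ← pow_add]
      rw [hsum2]
      rcases Nat.lt_or_ge k m with hkm | hkm
      · rw [show ∑ S ∈ (Finset.Icc 1 m).powersetCard (k+1), t ^ (S.sum id) = t ^ ((k+1) * ((k+1)+1) / 2) * gbinom t m (m - (k+1)) from ih (by omega)]
        have h3 : m + 1 - (k+1) = (m - (k+1)) + 1 := by omega
        rw [h3, gbinom_succ_succ]
        have h4 : (m-(k+1))+1 = m-k := by omega
        rw [h4]
        have hA : t ^ ((k+1)*((k+1)+1)/2) * t^(m-k) = t ^ (m+1+k*(k+1)/2) := by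
          rw [← pow_add]
          congr 1
          rw [tri]; omega
        linear_combination (-(gbinom t m (m-k))) * hA
      · have hkme : k = m := by omega
        subst hkme
        rw [Finset.powersetCard_eq_empty.mpr (by simp), Finset.sum_empty, zero_add,
          Nat.sub_self, Nat.sub_self, gbinom_zero_right, gbinom_zero_right, mul_one, mul_one]
        congr 1
        rw [tri]; omega

end GB

/-- Closed form `s(d, 2n+1) = x^{2n-d} q^{2n²-2dn+d²+3n} [n-1, 2n-d]_{q²}`
for `d, n ≥ 1`. -/
theorem sPoly_odd_closed (d n : ℕ) (hd : 1 ≤ d) (hn : 1 ≤ n) :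
    sPoly d (2 * n + 1) =
      MvPolynomial.X 0 ^ (2 * n - d) *
        MvPolynomial.X 1 ^ ((2 * n ^ 2 + d ^ 2 + 3 * n) - 2 * d * n) *
        gbinomZ (MvPolynomial.X 1 ^ 2) (n - 1)
          ((2 * n : ℤ) - (d : ℤ)) := by
  classical
  obtain ⟨m, rfl⟩ : ∃ m, n = m + 1 := ⟨n - 1, by omega⟩
  set x : MvPolynomial (Fin 2) ℤ := MvPolynomial.X 0 with hx
  set q : MvPolynomial (Fin 2) ℤ := MvPolynomial.X 1 with hq
  set B : Finset (Finset ℕ) :=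
    (Finset.Icc 1 m).powerset.filter (fun S => (m + 2) + S.card = d) with hB
  have hmemB : ∀ S, S ∈ B ↔ (S ⊆ Finset.Icc 1 m ∧ (m + 2) + S.card = d) := by
    intro S; simp [hB, Finset.mem_filter, Finset.mem_powerset]
  have hset : {L : List ℕ | IrrEBP L ∧ L.length = d ∧ L.headD 0 = 2 * (m + 1) + 1}
      = (fun S => (2 * (m + 1) + 1) :: body S (m + 1)) '' ↑B := by
    ext L
    simp only [Set.mem_setOf_eq, Set.mem_image, Finset.mem_coe]
    constructor
    · rintro ⟨h1, h2, h3⟩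
      obtain ⟨S, hS, rfl⟩ := oddClass m L h1 h3
      refine ⟨S, (hmemB S).mpr ⟨hS, ?_⟩, rfl⟩
      rw [oL_length m S hS] at h2
      exact h2
    · rintro ⟨S, hSB, rfl⟩
      obtain ⟨hS, hcard⟩ := (hmemB S).mp hSB
      exact ⟨oL_IrrEBP m S hS, by rw [oL_length m S hS]; exact hcard, rfl⟩
  have hinj : Set.InjOn (fun S => (2 * (m + 1) + 1) :: body S (m + 1)) ↑B := by
    intro S hS T hT h
    simp only [List.cons.injEq, true_and] at h
    have hS' := ((hmemB S).mp (Finset.mem_coe.mp hS)).1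
    have hT' := ((hmemB T).mp (Finset.mem_coe.mp hT)).1
    ext i
    constructor
    · intro hi
      have hb := hS' hi
      simp only [Finset.mem_Icc] at hb
      have : 2 * i + 1 ∈ body T (m + 1) := by
        rw [← h, mem_body_odd S (m + 1) i (by omega)]
        exact ⟨hi, by omega⟩
      exact ((mem_body_odd T (m + 1) i (by omega)).mp this).1
    · intro hi
      have hb := hT' hi
      simp only [Finset.mem_Icc] at hb
      have : 2 * i + 1 ∈ body S (m + 1) := by
        rw [h, mem_body_odd T (m + 1) i (by omega)]
        exact ⟨hi, by omega⟩
      exact ((mem_body_odd S (m + 1) i (by omega)).mp this).1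
  rw [sPoly, hset, finsum_mem_image hinj, finsum_mem_coe_finset]
  by_cases hrange : m + 2 ≤ d ∧ d ≤ 2 * (m + 1)
  · obtain ⟨c₀, rfl⟩ : ∃ c, d = (m + 2) + c := ⟨d - (m + 2), by omega⟩
    have hc₀m : c₀ ≤ m := by omega
    have hBeq : B = (Finset.Icc 1 m).powersetCard c₀ := by
      ext S
      rw [hmemB, Finset.mem_powersetCard]
      constructor <;> rintro ⟨h1, h2⟩ <;> exact ⟨h1, by omega⟩
    have hterm : ∀ S ∈ (Finset.Icc 1 m).powersetCard c₀,
        x ^ wt ((2 * (m + 1) + 1) :: body S (m + 1)) *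
          q ^ ((2 * (m + 1) + 1) :: body S (m + 1)).sum
        = (x ^ (m - c₀) * q ^ (((m + 1) * (m + 1) + 3 * (m + 1) + 1) + c₀)) *
            (q ^ 2) ^ (S.sum id) := by
      intro S hSc
      obtain ⟨hsub, hcard⟩ := Finset.mem_powersetCard.mp hSc
      rw [oL_wt m S hsub, oL_sum m S hsub, hcard, pow_add, pow_mul, mul_assoc]
    rw [hBeq, Finset.sum_congr rfl hterm, ← Finset.mul_sum, key_sum (q ^ 2) hc₀m]
    have hg : gbinomZ (q ^ 2) (m + 1 - 1) (2 * ((m + 1 : ℕ) : ℤ) - ((m + 2 + c₀ : ℕ) : ℤ))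
        = gbinom (q ^ 2) m (m - c₀) := by
      rw [gbinomZ, if_pos (by push_cast; omega)]
      have h1 : m + 1 - 1 = m := by omega
      have h2 : (2 * ((m + 1 : ℕ) : ℤ) - ((m + 2 + c₀ : ℕ) : ℤ)).toNat = m - c₀ := by omega
      rw [h1, h2]
    have hxe : 2 * (m + 1) - (m + 2 + c₀) = m - c₀ := by omega
    obtain ⟨e, he⟩ := Nat.even_mul_succ_self c₀
    have r1 : (m + 2 + c₀) ^ 2 = m*m + c₀*c₀ + 2*(m*c₀) + 4*m + 4*c₀ + 4 := by ring
    have r2 : 2 * (m + 1) ^ 2 = 2*(m*m) + 4*m + 2 := by ring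
    have r3 : 2 * (m + 2 + c₀) * (m + 1) = 2*(m*m) + 6*m + 2*(m*c₀) + 2*c₀ + 4 := by ring
    have r4 : (m + 1) * (m + 1) = m*m + 2*m + 1 := by ring
    have r5 : c₀ * (c₀ + 1) = c₀*c₀ + c₀ := by ring
    have hqe : q ^ (((m + 1) * (m + 1) + 3 * (m + 1) + 1) + c₀) *
        (q ^ 2) ^ (c₀ * (c₀ + 1) / 2)
        = q ^ ((2 * (m + 1) ^ 2 + (m + 2 + c₀) ^ 2 + 3 * (m + 1)) -
            2 * (m + 2 + c₀) * (m + 1)) := by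
      rw [← pow_mul, ← pow_add]
      congr 1
      omega
    rw [hxe, hg]
    linear_combination (x ^ (m - c₀) * gbinom (q ^ 2) m (m - c₀)) * hqe
  · have hBempty : B = ∅ := by
      ext S
      simp only [Finset.notMem_empty, iff_false]
      intro hSB
      obtain ⟨h1, h2⟩ := (hmemB S).mp hSB
      have hc : S.card ≤ m := by
        have := Finset.card_le_card h1
        simpa using this
      omega
    rw [hBempty, Finset.sum_empty]
    by_cases hdle : d ≤ 2 * (m + 1)
    · rw [gbinomZ, if_pos (by push_cast; omega)]
      rw [gbinom_eq_zero _ (show m + 1 - 1 < (2 * ((m + 1 : ℕ) : ℤ) - ((d : ℕ) : ℤ)).toNat by omega)]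
      rw [mul_zero]
    · rw [gbinomZ, if_neg (by push_cast; omega)]
      rw [mul_zero]
end

section
/- The two-variable generating function identity: 1 + Σ_{n≥1,m≥0} p_D(m,n) x^m q^n = 1 + Σ_{d≥1} Σ_{N≥0} s(d,N) / (q²;q²)_d, where p_D(m,n) is the number of Euclidean billiard partitions of n with weight-exponent m, (q²;q²)_d = ∏_{j=1}^{d}(1 - q^{2j}), and s(d,N) is the generating polynomial of irreducible Euclidean billiard partitions with d parts and largest part N. -/
/-- The number of Euclidean billiard partitions of `n` with weight exponent `m`. -/
noncomputable def pDW (m n : ℕ) : ℕ :=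
  {L : List ℕ | EBP L ∧ L.sum = n ∧ wt L = m}.ncard

/-- `s(d, N)` as a formal power series in `q` with coefficients polynomials
in `x`: the sum of `x^{wt π} q^{|π|}` over irreducible Euclidean billiard
partitions `π` with `d` parts and largest part `N`. -/
noncomputable def sPS (d N : ℕ) : PowerSeries (Polynomial ℤ) :=
  ∑ᶠ L ∈ {L : List ℕ | IrrEBP L ∧ L.length = d ∧ L.headD 0 = N},
    PowerSeries.monomial L.sum (Polynomial.X ^ wt L)

/-- `(q²; q²)_d = ∏_{j=1}^{d} (1 - q^{2j})`. -/
noncomputable def poch (d : ℕ) : PowerSeries (Polynomial ℤ) :=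
  ∏ j ∈ Finset.range d, (1 - PowerSeries.X ^ (2 * (j + 1)))


section Aux
open List


/-- one step of the reduction: next irreducible part given previous part `p`
and current (increasing-order) original part `a`. -/
def step (p a : ℕ) : ℕ := if a % 2 = p % 2 then p + 2 else p + 1

/-- the irreducible part, computed on the *reversed* (increasing) list. -/
def redAux : ℕ → List ℕ → List ℕ
  | _, [] => []
  | p, a :: t => step p a :: redAux (step p a) t

/-- the complementary weakly increasing list. -/
def cAux : ℕ → List ℕ → List ℕ
  | _, [] => []
  | p, a :: t => (a - step p a) / 2 :: cAux (step p a) t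

/-- recombination on reversed lists. -/
def comb (P c : List ℕ) : List ℕ := List.zipWith (fun q k => q + 2 * k) P c

lemma redAux_length (p : ℕ) (R : List ℕ) : (redAux p R).length = R.length := by
  induction R generalizing p with
  | nil => rfl
  | cons a t ih => simp [redAux, ih]

lemma cAux_length (p : ℕ) (R : List ℕ) : (cAux p R).length = R.length := by
  induction R generalizing p with
  | nil => rfl
  | cons a t ih => simp [cAux, ih]

lemma step_mod (p a : ℕ) : step p a % 2 = a % 2 := by
  unfold step
  split <;> omega

lemma step_le {p a ℓ : ℕ} (h1 : p ≤ ℓ) (h2 : p % 2 = ℓ % 2) (h3 : ℓ < a) : step p a ≤ a := by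
  unfold step
  rcases eq_or_ne (a % 2) (p % 2) with h | h <;> simp [h] <;> omega

/-- Main forward specification for the reduction, by induction with carry `p`
(the previously produced irreducible part) and `ℓ` (the previous original part). -/
lemma redAux_spec {R : List ℕ} {p ℓ : ℕ}
    (h1 : p ≤ ℓ) (h2 : p % 2 = ℓ % 2)
    (h3 : List.IsChain (· < ·) (ℓ :: R))
    (h4 : List.IsChain (fun a b => ¬(Odd a ∧ Odd b)) (ℓ :: R)) :
    List.IsChain (fun x y => x < y ∧ y ≤ x + 2) (p :: redAux p R) ∧
    (redAux p R).map (· % 2) = R.map (· % 2) ∧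
    comb (redAux p R) (cAux p R) = R ∧
    List.IsChain (· ≤ ·) ((ℓ - p) / 2 :: cAux p R) := by
  induction R generalizing p ℓ with
  | nil => simp [redAux, cAux, comb]
  | cons a t ih =>
    have hla : ℓ < a := (List.isChain_cons_cons.1 h3).1
    have hnt : ¬(Odd ℓ ∧ Odd a) := (List.isChain_cons_cons.1 h4).1
    set p' := step p a with hp'
    have hple : p' ≤ a := step_le h1 h2 hla
    have hpmod : p' % 2 = a % 2 := step_mod p a
    have hstep : p < p' ∧ p' ≤ p + 2 := by unfold step at hp'; split at hp' <;> omega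
    have hkey : ℓ - p ≤ a - p' := by
      -- case distinction on parity
      unfold step at hp'
      rcases eq_or_ne (a % 2) (p % 2) with h | h
      · -- a ≡ p ≡ ℓ mod 2, so a ≥ ℓ + 2
        rw [if_pos h] at hp'
        have : a % 2 = ℓ % 2 := by omega
        omega
      · rw [if_neg h] at hp'
        omega
    have ih' := ih (ℓ := a) (p := p') hple hpmod h3.tail h4.tail
    obtain ⟨c1, c2, c3, c4⟩ := ih'
    refine ⟨?_, ?_, ?_, ?_⟩
    · rw [redAux]
      exact List.isChain_cons_cons.2 ⟨⟨hstep.1, hstep.2⟩, c1⟩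
    · rw [redAux]
      simpa [hpmod, step_mod, hp'] using c2
    · rw [redAux, cAux, comb]
      simp only [List.zipWith_cons_cons]
      refine congrArg₂ _ ?_ c3
      have heven : (a - p') % 2 = 0 := by omega
      omega
    · rw [cAux]
      refine List.isChain_cons_cons.2 ⟨?_, c4⟩
      have hevenl : (ℓ - p) % 2 = 0 := by omega
      have hevena : (a - p') % 2 = 0 := by omega
      omega

lemma step_comb {p q k : ℕ} (h : p < q ∧ q ≤ p + 2) : step p (q + 2 * k) = q := by
  unfold step
  split <;> omega

/-- Backward specification: reduction recovers the pair. -/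
lemma comb_spec {P c : List ℕ} {p : ℕ} (hl : P.length = c.length)
    (hc : List.IsChain (fun x y => x < y ∧ y ≤ x + 2) (p :: P)) :
    redAux p (comb P c) = P ∧ cAux p (comb P c) = c ∧
      (comb P c).map (· % 2) = P.map (· % 2) := by
  induction P generalizing c p with
  | nil =>
    have : c = [] := by simpa using (List.length_eq_zero_iff.1 hl.symm)
    subst this; simp [comb, redAux, cAux]
  | cons q P' ih =>
    cases c with
    | nil => simp at hl
    | cons k c' =>
      have hq : p < q ∧ q ≤ p + 2 := (List.isChain_cons_cons.1 hc).1
      have hl' : P'.length = c'.length := by simpa using hl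
      have hc' : List.IsChain (fun x y => x < y ∧ y ≤ x + 2) (q :: P') := hc.tail
      obtain ⟨i1, i2, i3⟩ := ih hl' hc'
      have hs : step p (q + 2 * k) = q := step_comb hq
      refine ⟨?_, ?_, ?_⟩
      · rw [comb, List.zipWith_cons_cons, redAux, hs]
        exact congrArg _ i1
      · rw [comb, List.zipWith_cons_cons, cAux, hs]
        refine congrArg₂ _ (by omega) i2
      · rw [comb, List.zipWith_cons_cons]
        simp only [List.map_cons]
        refine congrArg₂ _ (by omega) i3

lemma comb_chain {P c : List ℕ} {p b : ℕ} (hl : P.length = c.length)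
    (hc : List.IsChain (fun x y => x < y ∧ y ≤ x + 2) (p :: P))
    (hcc : List.IsChain (· ≤ ·) (b :: c)) :
    List.IsChain (· < ·) ((p + 2 * b) :: comb P c) := by
  induction P generalizing c p b with
  | nil =>
    have : c = [] := by simpa using (List.length_eq_zero_iff.1 hl.symm)
    subst this; simp [comb]
  | cons q P' ih =>
    cases c with
    | nil => simp at hl
    | cons k c' =>
      have hq : p < q ∧ q ≤ p + 2 := (List.isChain_cons_cons.1 hc).1
      have hbk : b ≤ k := (List.isChain_cons_cons.1 hcc).1
      have := ih (by simpa using hl) hc.tail hcc.tail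
      rw [comb, List.zipWith_cons_cons]
      exact List.isChain_cons_cons.2 ⟨by omega, this⟩

lemma comb_length {P c : List ℕ} (hl : P.length = c.length) :
    (comb P c).length = P.length := by
  simp [comb, hl]

lemma comb_sum {P c : List ℕ} (hl : P.length = c.length) :
    (comb P c).sum = P.sum + 2 * c.sum := by
  induction P generalizing c with
  | nil =>
    have : c = [] := by simpa using (List.length_eq_zero_iff.1 hl.symm)
    subst this; simp [comb]
  | cons q P' ih =>
    cases c with
    | nil => simp at hl
    | cons k c' =>
      have := ih (c := c') (by simpa using hl)
      rw [comb] at this ⊢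
      simp only [List.zipWith_cons_cons, List.sum_cons, this]
      ring


abbrev noTwo (a b : ℕ) : Prop := ¬(Odd a ∧ Odd b)

/-- conjunction of two chains -/
lemma chain'_and {r s : ℕ → ℕ → Prop} : ∀ {l : List ℕ},
    IsChain r l → IsChain s l → IsChain (fun a b => r a b ∧ s a b) l
  | [], _, _ => isChain_nil
  | [_], _, _ => isChain_singleton _
  | a :: b :: t, hr, hs => by
    rw [isChain_cons_cons] at *
    exact ⟨⟨hr.1, hs.1⟩, chain'_and hr.2 hs.2⟩

lemma chain'_zero_lt {R : List ℕ} :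
    IsChain (· < ·) (0 :: R) ↔ IsChain (· < ·) R ∧ ∀ x ∈ R, 0 < x := by
  constructor
  · intro h
    have hp : Pairwise (· < ·) (0 :: R) := isChain_iff_pairwise.1 h
    rw [pairwise_cons] at hp
    exact ⟨isChain_iff_pairwise.2 hp.2, hp.1⟩
  · rintro ⟨h1, h2⟩
    refine isChain_cons.2 ⟨fun y hy => h2 y ?_, h1⟩
    exact mem_of_mem_head? hy

lemma chain'_zero_noTwo {R : List ℕ} :
    IsChain noTwo (0 :: R) ↔ IsChain noTwo R := by
  constructor
  · exact fun h => h.tail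
  · intro h
    refine isChain_cons.2 ⟨fun y _ => ?_, h⟩
    simp [noTwo]

lemma getLastD_eq_reverse_headD (L : List ℕ) (d : ℕ) :
    L.getLastD d = L.reverse.headD d := by
  rw [getLastD_eq_getLast?, headD_eq_head?, head?_reverse]

lemma chain'_reverse_lt {L : List ℕ} : L.reverse.IsChain (· < ·) ↔ L.IsChain (· > ·) :=
  List.isChain_reverse

lemma chain'_reverse_noTwo {L : List ℕ} : L.reverse.IsChain noTwo ↔ L.IsChain noTwo := by
  constructor
  · intro h
    exact List.isChain_reverse.1 (h.imp (fun _ _ hab h2 => hab ⟨h2.2, h2.1⟩))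
  · intro h
    exact (List.isChain_reverse.2 h).imp (fun _ _ hab h2 => hab ⟨h2.2, h2.1⟩)

lemma chain'_reverse_le2 {L : List ℕ} :
    L.reverse.IsChain (fun a b => b ≤ a + 2) ↔ L.IsChain (fun a b => a ≤ b + 2) :=
  List.isChain_reverse

/-- characterization of EBP in terms of the reversed list. -/
lemma EBP_iff_rev {L : List ℕ} :
    EBP L ↔ L.reverse ≠ [] ∧ IsChain (· < ·) (0 :: L.reverse) ∧
      IsChain noTwo (0 :: L.reverse) ∧ L.reverse.headD 1 % 2 = 0 := by
  unfold EBP List.Chain'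
  rw [chain'_zero_lt, chain'_zero_noTwo, chain'_reverse_lt, chain'_reverse_noTwo,
    getLastD_eq_reverse_headD, Nat.even_iff]
  constructor
  · rintro ⟨h1, h2, h3, h4, h5⟩
    exact ⟨by simpa using h1, ⟨h3, fun x hx => h2 x (by simpa using hx)⟩, h5, h4⟩
  · rintro ⟨h1, ⟨h2, h3⟩, h4, h5⟩
    exact ⟨by simpa using h1, fun x hx => h3 x (by simpa using hx), h2, h5, h4⟩

/-- characterization of IrrEBP in terms of the reversed list. -/
lemma IrrEBP_iff_rev {L : List ℕ} :
    IrrEBP L ↔ L.reverse ≠ [] ∧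
      IsChain (fun x y => x < y ∧ y ≤ x + 2) (0 :: L.reverse) ∧
      IsChain noTwo (0 :: L.reverse) ∧ L.reverse.headD 1 % 2 = 0 := by
  constructor
  · rintro ⟨hE, h2, h3⟩
    obtain ⟨e1, e2, e3, e4⟩ := EBP_iff_rev.1 hE
    refine ⟨e1, ?_, e3, e4⟩
    have hch : IsChain (fun a b => b ≤ a + 2) (L.reverse) := chain'_reverse_le2.2 h3
    have hch0 : IsChain (fun a b => b ≤ a + 2) (0 :: L.reverse) := by
      refine isChain_cons.2 ⟨fun y hy => ?_, hch⟩
      -- head of reverse is getLast = 2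
      have : L.reverse.headD 1 = 2 := by
        rw [← getLastD_eq_reverse_headD]; exact h2
      cases hR : L.reverse with
      | nil => simp [hR] at hy
      | cons a t =>
          rw [hR] at hy this
          simp at hy this
          omega
    exact chain'_and e2 hch0
  · rintro ⟨h1, h2, h3, h4⟩
    have e2 : IsChain (· < ·) (0 :: L.reverse) := h2.imp (fun _ _ h => h.1)
    have e5 : IsChain (fun x y => y ≤ x + 2) (0 :: L.reverse) := h2.imp (fun _ _ h => h.2)
    refine ⟨EBP_iff_rev.2 ⟨h1, e2, h3, h4⟩, ?_, ?_⟩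
    · rw [getLastD_eq_reverse_headD]
      cases hR : L.reverse with
      | nil => exact absurd hR h1
      | cons a t =>
          rw [hR] at e2 e5 h4
          have := (isChain_cons_cons.1 e2).1
          have := (isChain_cons_cons.1 e5).1
          simp at h4 ⊢
          omega
    · exact chain'_reverse_le2.1 (e5.tail)

/-- `wt` only depends on the parities, the length being fixed. -/
lemma wt_congr {L M : List ℕ} (h : L.map (· % 2) = M.map (· % 2)) : wt L = wt M := by
  have hodd : oddCount L = oddCount M := by
    unfold oddCount
    induction L generalizing M with
    | nil => cases M <;> simp_all
    | cons a t ih =>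
      cases M with
      | nil => simp at h
      | cons b s =>
        simp only [map_cons, cons.injEq] at h
        have := ih h.2
        simp only [filter_cons, h.1]
        split <;> simp [this]
  have hhead : L.headD 0 % 2 = M.headD 0 % 2 := by
    cases L with
    | nil => cases M <;> simp_all
    | cons a t =>
      cases M with
      | nil => simp at h
      | cons b s => simpa using (congrArg (fun l => l.headD 1) h)
  have hlen : L.length = M.length := by
    have := congrArg List.length h; simpa using this
  unfold wt
  rw [hlen, hodd, hhead]


def Lred (M : List ℕ) : List ℕ := (redAux 0 M.reverse).reverse
def Lc (M : List ℕ) : List ℕ := (cAux 0 M.reverse).reverse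
def Lcomb (P c : List ℕ) : List ℕ := (comb P.reverse c.reverse).reverse

lemma chain'_noTwo_congr {l l' : List ℕ} (h : l.map (· % 2) = l'.map (· % 2)) :
    IsChain noTwo l ↔ IsChain noTwo l' := by
  have key : ∀ m : List ℕ, IsChain noTwo m ↔
      IsChain (fun x y => ¬(x = 1 ∧ y = 1)) (m.map (· % 2)) := by
    intro m
    rw [List.isChain_map]
    constructor <;> intro hm <;>
      exact hm.imp (fun a b hab => by
        simpa [noTwo, Nat.odd_iff] using hab)
  rw [key, key, h]

lemma headD_mod_congr {l l' : List ℕ} (d : ℕ) (h : l.map (· % 2) = l'.map (· % 2)) :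
    l.headD d % 2 = l'.headD d % 2 := by
  cases l with
  | nil => cases l' <;> simp_all
  | cons a t =>
    cases l' with
    | nil => simp at h
    | cons b s =>
      simp only [map_cons, cons.injEq] at h
      simpa using h.1

lemma map_mod_reverse (l : List ℕ) : l.reverse.map (· % 2) = (l.map (· % 2)).reverse :=
  List.map_reverse

/-- the reduction of an EBP, together with all its properties. -/
lemma bij_backward {M : List ℕ} (hM : EBP M) :
    IrrEBP (Lred M) ∧ (Lred M).length = M.length ∧
    (Lc M).IsChain (· ≥ ·) ∧ (Lc M).length = M.length ∧
    (Lred M).sum + 2 * (Lc M).sum = M.sum ∧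
    Lcomb (Lred M) (Lc M) = M ∧ wt (Lred M) = wt M := by
  obtain ⟨hne, h3, h4, h5⟩ := EBP_iff_rev.1 hM
  set R := M.reverse with hR
  obtain ⟨c1, c2, c3, c4⟩ := redAux_spec (R := R) (p := 0) (ℓ := 0) le_rfl rfl h3 h4
  set π := redAux 0 R with hπ
  set cc := cAux 0 R with hcc
  have hπlen : π.length = R.length := redAux_length 0 R
  have hcclen : cc.length = R.length := cAux_length 0 R
  have hπne : π ≠ [] := by
    intro hnil
    rw [hnil] at hπlen
    exact hne (List.length_eq_zero_iff.1 hπlen.symm)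
  have hIrr : IrrEBP (Lred M) := by
    rw [IrrEBP_iff_rev]
    rw [Lred, List.reverse_reverse]
    refine ⟨hπne, c1, ?_, ?_⟩
    · rw [chain'_zero_noTwo] at h4 ⊢
      exact (chain'_noTwo_congr c2).2 h4
    · rw [headD_mod_congr 1 c2]
      exact h5
  have hLredlen : (Lred M).length = M.length := by
    rw [Lred, List.length_reverse, hπlen, hR, List.length_reverse]
  have hLclen : (Lc M).length = M.length := by
    rw [Lc, List.length_reverse, hcclen, hR, List.length_reverse]
  have hLcchain : (Lc M).IsChain (· ≥ ·) := by
    rw [Lc]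
    exact List.isChain_reverse.2 c4.tail
  have hsum : (Lred M).sum + 2 * (Lc M).sum = M.sum := by
    have := comb_sum (P := π) (c := cc) (by rw [hπlen, hcclen])
    rw [c3] at this
    rw [Lred, Lc, List.sum_reverse, List.sum_reverse]
    rw [← List.sum_reverse M, ← hR, this]
  have hcombeq : Lcomb (Lred M) (Lc M) = M := by
    rw [Lcomb, Lred, Lc, List.reverse_reverse, List.reverse_reverse, c3, hR,
      List.reverse_reverse]
  have hwt : wt (Lred M) = wt M := by
    refine wt_congr ?_
    rw [Lred, map_mod_reverse, c2, ← map_mod_reverse, hR, List.reverse_reverse]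
  exact ⟨hIrr, hLredlen, hLcchain, hLclen, hsum, hcombeq, hwt⟩

/-- recombination of an irreducible EBP with a weakly decreasing list. -/
lemma bij_forward {P c : List ℕ} (hP : IrrEBP P) (hc : c.IsChain (· ≥ ·))
    (hlen : c.length = P.length) :
    EBP (Lcomb P c) ∧ (Lcomb P c).length = P.length ∧
    (Lcomb P c).sum = P.sum + 2 * c.sum ∧
    Lred (Lcomb P c) = P ∧ Lc (Lcomb P c) = c ∧ wt (Lcomb P c) = wt P := by
  obtain ⟨hne, hch, hnt, hhd⟩ := IrrEBP_iff_rev.1 hP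
  set P' := P.reverse with hP'
  set c' := c.reverse with hc'
  have hl : P'.length = c'.length := by
    rw [hP', hc', List.length_reverse, List.length_reverse, hlen]
  obtain ⟨r1, r2, r3⟩ := comb_spec hl hch
  have hc'chain : IsChain (· ≤ ·) (0 :: c') := by
    refine isChain_cons.2 ⟨fun y _ => Nat.zero_le y, ?_⟩
    exact List.isChain_reverse.2 hc
  have hlt : IsChain (· < ·) (0 :: comb P' c') := by
    have := comb_chain hl hch hc'chain
    simpa using this
  have hcomblen : (comb P' c').length = P'.length := comb_length hl
  have hcombne : comb P' c' ≠ [] := by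
    intro hnil
    rw [hnil] at hcomblen
    exact hne (List.length_eq_zero_iff.1 hcomblen.symm)
  have hE : EBP (Lcomb P c) := by
    rw [EBP_iff_rev, Lcomb, List.reverse_reverse]
    refine ⟨hcombne, hlt, ?_, ?_⟩
    · rw [chain'_zero_noTwo] at hnt ⊢
      exact (chain'_noTwo_congr r3).2 hnt
    · rw [headD_mod_congr 1 r3]
      exact hhd
  have hLlen : (Lcomb P c).length = P.length := by
    rw [Lcomb, List.length_reverse, hcomblen, hP', List.length_reverse]
  have hLsum : (Lcomb P c).sum = P.sum + 2 * c.sum := by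
    rw [Lcomb, List.sum_reverse, comb_sum hl, hP', hc', List.sum_reverse,
      List.sum_reverse]
  have hLred : Lred (Lcomb P c) = P := by
    rw [Lred, Lcomb, List.reverse_reverse, r1, hP', List.reverse_reverse]
  have hLc : Lc (Lcomb P c) = c := by
    rw [Lc, Lcomb, List.reverse_reverse, r2, hc', List.reverse_reverse]
  have hwt : wt (Lcomb P c) = wt P := by
    refine wt_congr ?_
    rw [Lcomb, map_mod_reverse, r3, ← map_mod_reverse, hP', List.reverse_reverse]
  exact ⟨hE, hLlen, hLsum, hLred, hLc, hwt⟩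

lemma length_le_sum {L : List ℕ} (h : ∀ x ∈ L, 0 < x) : L.length ≤ L.sum := by
  induction L with
  | nil => simp
  | cons a t ih =>
    have := h a (by simp)
    have := ih (fun x hx => h x (by simp [hx]))
    simp only [List.length_cons, List.sum_cons]
    omega

lemma finite_bdd (a b : ℕ) : {L : List ℕ | L.length ≤ a ∧ ∀ x ∈ L, x < b}.Finite := by
  have h := (List.finite_length_le (Fin b) a).image (List.map (Fin.val))
  refine h.subset ?_
  rintro L ⟨h1, h2⟩
  refine ⟨L.pmap (fun x h => (⟨x, h⟩ : Fin b)) h2, by simpa using h1, ?_⟩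
  rw [List.map_pmap, List.pmap_eq_map]
  exact List.map_id _

def setA (n : ℕ) : Set (List ℕ) := {L | EBP L ∧ L.sum = n}

lemma finite_setA (n : ℕ) : (setA n).Finite := by
  refine (finite_bdd n (n + 1)).subset ?_
  rintro L ⟨hE, hsum⟩
  refine ⟨hsum ▸ length_le_sum hE.2.1, fun x hx => ?_⟩
  have := List.single_le_sum (fun y _ => Nat.zero_le y) x hx
  omega

lemma chain'_le2_bound {R : List ℕ} {p : ℕ}
    (h : List.IsChain (fun x y => y ≤ x + 2) (p :: R)) :
    ∀ x ∈ R, x ≤ p + 2 * R.length := by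
  induction R generalizing p with
  | nil => simp
  | cons a t ih =>
    have ha : a ≤ p + 2 := (List.isChain_cons_cons.1 h).1
    intro x hx
    rcases List.mem_cons.1 hx with rfl | hx
    · simp; omega
    · have := ih (p := a) h.tail x hx
      simp only [List.length_cons]
      omega

lemma irr_entry_bound {L : List ℕ} (hL : IrrEBP L) : ∀ x ∈ L, x ≤ 2 * L.length := by
  obtain ⟨hne, hch, _, _⟩ := IrrEBP_iff_rev.1 hL
  intro x hx
  have hx' : x ∈ L.reverse := by simpa using hx
  have := chain'_le2_bound (hch.imp (fun _ _ h => h.2)) x hx'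
  simpa using this

def setI (d : ℕ) : Set (List ℕ) := {L | IrrEBP L ∧ L.length = d}

lemma finite_setI (d : ℕ) : (setI d).Finite := by
  refine (finite_bdd d (2 * d + 1)).subset ?_
  rintro L ⟨hI, hlen⟩
  exact ⟨hlen.le, fun x hx => by have := irr_entry_bound hI x hx; omega⟩

def setS (d N : ℕ) : Set (List ℕ) := {L | IrrEBP L ∧ L.length = d ∧ L.headD 0 = N}

lemma finite_setS (d N : ℕ) : (setS d N).Finite :=
  (finite_setI d).subset (fun L hL => ⟨hL.1, hL.2.1⟩)

def setC (d j : ℕ) : Set (List ℕ) := {c | c.length = d ∧ c.IsChain (· ≥ ·) ∧ 2 * c.sum = j}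

lemma finite_setC (d j : ℕ) : (setC d j).Finite := by
  refine (finite_bdd d (j + 1)).subset ?_
  rintro c ⟨hlen, _, hsum⟩
  refine ⟨hlen.le, fun x hx => ?_⟩
  have := List.single_le_sum (fun y _ => Nat.zero_le y) x hx
  omega

noncomputable def cnt (d j : ℕ) : ℕ := (setC d j).ncard

noncomputable def Gd (d : ℕ) : PowerSeries (Polynomial ℤ) :=
  PowerSeries.mk fun j => Polynomial.C (cnt d j : ℤ)

lemma getLastD_le_of_chain_ge : ∀ {c : List ℕ}, c.IsChain (· ≥ ·) →
    ∀ x ∈ c, c.getLastD 0 ≤ x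
  | [], _, x, hx => by simp at hx
  | [a], _, x, hx => by simp at hx; simp [hx]
  | a :: b :: t, h, x, hx => by
    have hab : a ≥ b := (List.isChain_cons_cons.1 h).1
    have ih := getLastD_le_of_chain_ge h.tail
    rcases List.mem_cons.1 hx with rfl | hx
    · exact le_trans (ih b (by simp)) hab
    · exact ih x hx

lemma sum_map_succ (l : List ℕ) : (l.map (· + 1)).sum = l.sum + l.length := by
  induction l with
  | nil => simp
  | cons a t ih => simp [ih]; omega

lemma getLastD_map_succ {c : List ℕ} (h : c ≠ []) :
    (c.map (· + 1)).getLastD 0 = c.getLastD 0 + 1 := by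
  rw [getLastD_eq_reverse_headD, getLastD_eq_reverse_headD, ← List.map_reverse]
  cases hc : c.reverse with
  | nil => exact absurd (by simpa using hc) h
  | cons a t => simp

lemma cnt_zero (j : ℕ) : cnt 0 j = if j = 0 then 1 else 0 := by
  unfold cnt setC
  split_ifs with h
  · subst h
    have : {c : List ℕ | c.length = 0 ∧ c.IsChain (· ≥ ·) ∧ 2 * c.sum = 0} = {[]} := by
      ext c
      constructor
      · rintro ⟨h1, -, -⟩
        simpa using List.length_eq_zero_iff.1 h1
      · rintro rfl
        simp
    rw [this, Set.ncard_singleton]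
  · have : {c : List ℕ | c.length = 0 ∧ c.IsChain (· ≥ ·) ∧ 2 * c.sum = j} = ∅ := by
      ext c
      simp only [Set.mem_setOf_eq, Set.mem_empty_iff_false, iff_false]
      rintro ⟨h1, -, h3⟩
      rw [List.length_eq_zero_iff.1 h1] at h3
      simp at h3
      omega
    rw [this, Set.ncard_empty]

lemma cnt_rec (d j : ℕ) :
    cnt (d + 1) j = cnt d j +
      (if 2 * (d + 1) ≤ j then cnt (d + 1) (j - 2 * (d + 1)) else 0) := by
  classical
  have hfin := finite_setC (d + 1) j
  set S0 : Set (List ℕ) := {c | c ∈ setC (d + 1) j ∧ c.getLastD 0 = 0} with hS0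
  set S1 : Set (List ℕ) := {c | c ∈ setC (d + 1) j ∧ c.getLastD 0 ≠ 0} with hS1
  have hsub0 : S0 ⊆ setC (d + 1) j := fun c hc => hc.1
  have hsub1 : S1 ⊆ setC (d + 1) j := fun c hc => hc.1
  have hunion : setC (d + 1) j = S0 ∪ S1 := by
    ext c
    constructor
    · intro hc
      by_cases h : c.getLastD 0 = 0
      · exact Or.inl ⟨hc, h⟩
      · exact Or.inr ⟨hc, h⟩
    · rintro (⟨hc, -⟩ | ⟨hc, -⟩) <;> exact hc
  have hdisj : Disjoint S0 S1 := by
    rw [Set.disjoint_left]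
    rintro c ⟨-, h0⟩ ⟨-, h1⟩
    exact h1 h0
  have himg0 : S0 = (fun c => c ++ [0]) '' setC d j := by
    ext c
    constructor
    · rintro ⟨⟨hlen, hch, hsum⟩, hlast⟩
      have hne : c ≠ [] := by
        intro h; rw [h] at hlen; simp at hlen
      have hdecomp := List.dropLast_append_getLast hne
      have hlast' : c.getLast hne = 0 := by
        rw [List.getLastD_eq_getLast?, List.getLast?_eq_getLast hne] at hlast
        simpa using hlast
      refine ⟨c.dropLast, ⟨?_, ?_, ?_⟩, ?_⟩
      · rw [List.length_dropLast, hlen]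
        omega
      · exact hch.prefix ⟨[c.getLast hne], hdecomp⟩
      · have : c.sum = c.dropLast.sum := by
          conv_lhs => rw [← hdecomp]
          rw [List.sum_append, hlast']
          simp
        rw [← this, hsum]
      · show c.dropLast ++ [0] = c
        rw [← hlast', hdecomp]
    · rintro ⟨c', ⟨hlen, hch, hsum⟩, rfl⟩
      refine ⟨⟨by simp [hlen], ?_, by simp [hsum]⟩, by simp [List.getLastD_concat]⟩
      refine List.isChain_append.2 ⟨hch, List.isChain_singleton _, ?_⟩
      intro x _ y hy
      simp only [List.head?_cons, Option.mem_some_iff] at hy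
      omega
  have hcard0 : S0.ncard = cnt d j := by
    rw [himg0, Set.ncard_image_of_injective _ (List.append_left_injective [0])]
    rfl
  have hcard1 : S1.ncard =
      (if 2 * (d + 1) ≤ j then cnt (d + 1) (j - 2 * (d + 1)) else 0) := by
    split_ifs with h
    · have himg1 : S1 = (List.map (· + 1)) '' setC (d + 1) (j - 2 * (d + 1)) := by
        ext c
        constructor
        · rintro ⟨⟨hlen, hch, hsum⟩, hlast⟩
          have hpos : ∀ x ∈ c, 1 ≤ x := fun x hx =>
            le_trans (Nat.one_le_iff_ne_zero.2 hlast) (getLastD_le_of_chain_ge hch x hx)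
          have hmapback : (c.map (· - 1)).map (· + 1) = c := by
            rw [List.map_map]
            conv_rhs => rw [← List.map_id c]
            exact List.map_congr_left (fun x hx => by
              have := hpos x hx; simp; omega)
          have hsum' : c.sum = (c.map (· - 1)).sum + (d + 1) := by
            have h2 := sum_map_succ (c.map (· - 1))
            rw [hmapback] at h2
            have h3 : (c.map (· - 1)).length = d + 1 := by simp [hlen]
            omega
          refine ⟨c.map (· - 1), ⟨by simp [hlen], ?_, by omega⟩, hmapback⟩
          rw [List.isChain_map]
          exact hch.imp (fun a b hab => Nat.sub_le_sub_right hab 1)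
        · rintro ⟨c', ⟨hlen, hch, hsum⟩, rfl⟩
          have hne : c' ≠ [] := by
            intro hh; rw [hh] at hlen; simp at hlen
          refine ⟨⟨by simp [hlen], ?_, ?_⟩, ?_⟩
          · rw [List.isChain_map]
            exact hch.imp (fun a b hab => by omega)
          · rw [sum_map_succ, hlen]
            omega
          · rw [getLastD_map_succ hne]
            omega
      rw [himg1, Set.ncard_image_of_injective _
        (List.map_injective_iff.2 (fun a b hab => by omega))]
      rfl
    · have : S1 = ∅ := by
        ext c
        simp only [Set.mem_empty_iff_false, iff_false]
        rintro ⟨⟨hlen, hch, hsum⟩, hlast⟩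
        have hpos : ∀ x ∈ c, 0 < x := fun x hx =>
          lt_of_lt_of_le (Nat.pos_of_ne_zero hlast) (getLastD_le_of_chain_ge hch x hx)
        have := length_le_sum hpos
        omega
      rw [this, Set.ncard_empty]
  calc cnt (d + 1) j = (S0 ∪ S1).ncard := by rw [cnt, hunion]
    _ = S0.ncard + S1.ncard :=
        Set.ncard_union_eq hdisj (hfin.subset hsub0) (hfin.subset hsub1)
    _ = _ := by rw [hcard0, hcard1]

open PowerSeries in
lemma Gd_zero : Gd 0 = 1 := by
  ext n
  rw [Gd, coeff_mk, coeff_one, cnt_zero]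
  split_ifs <;> simp

open PowerSeries in
lemma one_sub_mul_Gd (d : ℕ) :
    (1 - (X : PowerSeries (Polynomial ℤ)) ^ (2 * (d + 1))) * Gd (d + 1) = Gd d := by
  have key : Gd (d + 1) - Gd (d + 1) * X ^ (2 * (d + 1)) = Gd d := by
    ext n
    rw [map_sub, coeff_mul_X_pow']
    simp only [Gd, coeff_mk]
    split_ifs with h
    · have h2 : cnt (d + 1) n = cnt d n + cnt (d + 1) (n - 2 * (d + 1)) := by
        rw [cnt_rec d n, if_pos h]
      rw [← Polynomial.C_sub]
      congr 1
      rw [h2]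
      push_cast
      ring
    · have h2 : cnt (d + 1) n = cnt d n := by
        rw [cnt_rec d n, if_neg h, Nat.add_zero]
      rw [sub_zero, h2]
  calc (1 - (X : PowerSeries (Polynomial ℤ)) ^ (2 * (d + 1))) * Gd (d + 1)
      = Gd (d + 1) - Gd (d + 1) * X ^ (2 * (d + 1)) := by ring
    _ = Gd d := key

lemma poch_succ (d : ℕ) :
    poch (d + 1) = poch d * (1 - (PowerSeries.X : PowerSeries (Polynomial ℤ)) ^ (2 * (d + 1))) :=
  Finset.prod_range_succ _ _

lemma poch_mul_Gd (d : ℕ) : poch d * Gd d = 1 := by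
  induction d with
  | zero => rw [Gd_zero, poch]; simp
  | succ d ih =>
    rw [poch_succ, mul_assoc, one_sub_mul_Gd, ih]

lemma constCoeff_poch (d : ℕ) :
    PowerSeries.constantCoeff (poch d) = 1 := by
  rw [poch, map_prod]
  refine Finset.prod_eq_one (fun j _ => ?_)
  rw [map_sub, map_one, map_pow, PowerSeries.constantCoeff_X]
  simp

lemma inv_poch_eq (d : ℕ) :
    PowerSeries.invOfUnit (poch d) 1 = Gd d := by
  have h1 : poch d * PowerSeries.invOfUnit (poch d) 1 = 1 :=
    PowerSeries.mul_invOfUnit _ 1 (by rw [constCoeff_poch]; rfl)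
  calc PowerSeries.invOfUnit (poch d) 1
      = (Gd d * poch d) * PowerSeries.invOfUnit (poch d) 1 := by
        rw [mul_comm (Gd d), poch_mul_Gd, one_mul]
    _ = Gd d * (poch d * PowerSeries.invOfUnit (poch d) 1) := by ring
    _ = Gd d := by rw [h1, mul_one]

open PowerSeries

noncomputable def Afin (n : ℕ) : Finset (List ℕ) := (finite_setA n).toFinset
noncomputable def Ifin (d : ℕ) : Finset (List ℕ) := (finite_setI d).toFinset
noncomputable def Cfin (d j : ℕ) : Finset (List ℕ) := (finite_setC d j).toFinset
noncomputable def Sfin (d N : ℕ) : Finset (List ℕ) := (finite_setS d N).toFinset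

lemma mem_Afin {n : ℕ} {L : List ℕ} : L ∈ Afin n ↔ EBP L ∧ L.sum = n := by
  rw [Afin, Set.Finite.mem_toFinset]; rfl
lemma mem_Ifin {d : ℕ} {L : List ℕ} : L ∈ Ifin d ↔ IrrEBP L ∧ L.length = d := by
  rw [Ifin, Set.Finite.mem_toFinset]; rfl
lemma mem_Cfin {d j : ℕ} {c : List ℕ} :
    c ∈ Cfin d j ↔ c.length = d ∧ c.IsChain (· ≥ ·) ∧ 2 * c.sum = j := by
  rw [Cfin, Set.Finite.mem_toFinset]; rfl
lemma mem_Sfin {d N : ℕ} {L : List ℕ} :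
    L ∈ Sfin d N ↔ IrrEBP L ∧ L.length = d ∧ L.headD 0 = N := by
  rw [Sfin, Set.Finite.mem_toFinset]; rfl

noncomputable def T (d : ℕ) : PowerSeries (Polynomial ℤ) :=
  ∑ L ∈ Ifin d, PowerSeries.monomial L.sum (Polynomial.X ^ wt L)

lemma sPS_eq (d N : ℕ) :
    sPS d N = ∑ L ∈ Sfin d N, PowerSeries.monomial L.sum (Polynomial.X ^ wt L) :=
  finsum_mem_eq_finite_toFinset_sum _ (finite_setS d N)

lemma headD_mem {L : List ℕ} (h : L ≠ []) : L.headD 0 ∈ L := by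
  cases L with
  | nil => exact absurd rfl h
  | cons a t => simp

lemma Sfin_empty {d N : ℕ} (h : 2 * d + 1 ≤ N) : Sfin d N = ∅ := by
  ext L
  simp only [Finset.notMem_empty, iff_false, mem_Sfin]
  rintro ⟨hI, hlen, hhd⟩
  have hne : L ≠ [] := hI.1.1
  have := irr_entry_bound hI _ (headD_mem hne)
  omega

lemma sPS_zero {d N : ℕ} (h : 2 * d + 1 ≤ N) : sPS d N = 0 := by
  rw [sPS_eq, Sfin_empty h, Finset.sum_empty]

lemma sum_sPS (d : ℕ) : ∑ N ∈ Finset.range (2 * d + 1), sPS d N = T d := by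
  classical
  have hbi : Ifin d = (Finset.range (2 * d + 1)).biUnion (fun N => Sfin d N) := by
    ext L
    simp only [Finset.mem_biUnion, Finset.mem_range, mem_Ifin, mem_Sfin]
    constructor
    · rintro ⟨hI, hlen⟩
      refine ⟨L.headD 0, ?_, hI, hlen, rfl⟩
      have := irr_entry_bound hI _ (headD_mem hI.1.1)
      omega
    · rintro ⟨N, -, hI, hlen, -⟩
      exact ⟨hI, hlen⟩
  have hdisj : (↑(Finset.range (2 * d + 1)) : Set ℕ).PairwiseDisjoint (fun N => Sfin d N) := by
    intro N₁ _ N₂ _ hne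
    rw [Function.onFun, Finset.disjoint_left]
    intro L hL1 hL2
    rw [mem_Sfin] at hL1 hL2
    exact hne (hL1.2.2 ▸ hL2.2.2)
  rw [T, hbi, Finset.sum_biUnion hdisj]
  exact Finset.sum_congr rfl (fun N _ => sPS_eq d N)

lemma coeff_T (d i : ℕ) :
    PowerSeries.coeff i (T d) =
      ∑ L ∈ (Ifin d).filter (fun L => L.sum = i), Polynomial.X ^ wt L := by
  classical
  rw [T, map_sum, Finset.sum_filter]
  refine Finset.sum_congr rfl (fun L _ => ?_)
  rw [PowerSeries.coeff_monomial]
  by_cases h : L.sum = i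
  · simp [h]
  · simp [h, Ne.symm h]

lemma coeff_Gd (d j : ℕ) :
    PowerSeries.coeff j (Gd d) = Polynomial.C (((Cfin d j).card : ℤ)) := by
  rw [Gd, PowerSeries.coeff_mk, cnt, Set.ncard_eq_toFinset_card _ (finite_setC d j)]
  rfl

lemma mul_C_card (P : Polynomial ℤ) (s : Finset (List ℕ)) :
    P * Polynomial.C ((s.card : ℤ)) = ∑ _c ∈ s, P := by
  rw [Finset.sum_const, nsmul_eq_mul, mul_comm]
  norm_cast

/-- The master identity: coefficientwise, irreducible EBPs with `d` parts times
the inverse Pochhammer factor give all EBPs with `d` parts. -/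
lemma master (n d : ℕ) :
    PowerSeries.coeff n (T d * Gd d) =
      ∑ M ∈ (Afin n).filter (fun M => M.length = d), Polynomial.X ^ wt M := by
  classical
  rw [PowerSeries.coeff_mul]
  have step1 : ∀ p : ℕ × ℕ,
      (PowerSeries.coeff p.1 (T d)) * (PowerSeries.coeff p.2 (Gd d))
        = ∑ q ∈ ((Ifin d).filter (fun L => L.sum = p.1)) ×ˢ (Cfin d p.2),
            Polynomial.X ^ wt q.1 := by
    intro p
    rw [coeff_T, coeff_Gd, Finset.sum_mul, Finset.sum_product]
    refine Finset.sum_congr rfl (fun L _ => ?_)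
    rw [mul_C_card]
  rw [Finset.sum_congr rfl (fun p _ => step1 p), ← Finset.sum_biUnion]
  · -- now a bijection between pairs and EBPs
    refine Finset.sum_nbij' (fun q => Lcomb q.1 q.2) (fun M => (Lred M, Lc M)) ?_ ?_ ?_ ?_ ?_
    · -- maps into Afin filter
      rintro ⟨P, c⟩ hq
      simp only [Finset.mem_biUnion, Finset.HasAntidiagonal.mem_antidiagonal, Finset.mem_product,
        Finset.mem_filter, mem_Ifin, mem_Cfin] at hq
      obtain ⟨p, hpsum, ⟨⟨⟨hI, hPlen⟩, hPsum⟩, hclen, hch, hcsum⟩⟩ := hq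
      obtain ⟨hE, hlen, hsum, -, -, -⟩ := bij_forward hI hch (by rw [hclen, hPlen])
      rw [Finset.mem_filter, mem_Afin]
      exact ⟨⟨hE, by rw [hsum, hPsum, hcsum]; omega⟩, by rw [hlen, hPlen]⟩
    · -- maps back
      intro M hM
      rw [Finset.mem_filter, mem_Afin] at hM
      obtain ⟨⟨hE, hsum⟩, hlen⟩ := hM
      obtain ⟨hI, hrlen, hcch, hclen, hrsum, -, -⟩ := bij_backward hE
      simp only [Finset.mem_biUnion, Finset.HasAntidiagonal.mem_antidiagonal, Finset.mem_product,
        Finset.mem_filter, mem_Ifin, mem_Cfin]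
      exact ⟨((Lred M).sum, 2 * (Lc M).sum), by omega,
        ⟨⟨⟨hI, by omega⟩, rfl⟩, by omega, hcch, rfl⟩⟩
    · -- left inverse
      rintro ⟨P, c⟩ hq
      simp only [Finset.mem_biUnion, Finset.mem_antidiagonal, Finset.mem_product,
        Finset.mem_filter, mem_Ifin, mem_Cfin] at hq
      obtain ⟨p, hpsum, ⟨⟨⟨hI, hPlen⟩, hPsum⟩, hclen, hch, hcsum⟩⟩ := hq
      obtain ⟨-, -, -, h4, h5, -⟩ := bij_forward hI hch (by rw [hclen, hPlen])
      simp [h4, h5]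
    · -- right inverse
      intro M hM
      rw [Finset.mem_filter, mem_Afin] at hM
      obtain ⟨-, -, -, -, -, h6, -⟩ := bij_backward hM.1.1
      exact h6
    · -- weights agree
      rintro ⟨P, c⟩ hq
      simp only [Finset.mem_biUnion, Finset.mem_antidiagonal, Finset.mem_product,
        Finset.mem_filter, mem_Ifin, mem_Cfin] at hq
      obtain ⟨p, hpsum, ⟨⟨⟨hI, hPlen⟩, hPsum⟩, hclen, hch, hcsum⟩⟩ := hq
      obtain ⟨-, -, -, -, -, hwt⟩ := bij_forward hI hch (by rw [hclen, hPlen])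
      exact congrArg (Polynomial.X ^ ·) hwt.symm
  · -- disjointness of the biUnion
    intro p₁ _ p₂ _ hne
    rw [Function.onFun, Finset.disjoint_left]
    rintro ⟨P, c⟩ h1 h2
    simp only [Finset.mem_product, Finset.mem_filter, mem_Ifin, mem_Cfin] at h1 h2
    exact hne (Prod.ext (h1.1.2 ▸ h2.1.2) (h1.2.2.2 ▸ h2.2.2.2))

lemma wt_le_length (L : List ℕ) : wt L ≤ L.length := by
  unfold wt
  split <;> omega

lemma inner_sum_eq (n d : ℕ) :
    (∑ᶠ N : ℕ, PowerSeries.coeff n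
        (sPS d N * PowerSeries.invOfUnit (poch d) 1)) =
      ∑ M ∈ (Afin n).filter (fun M => M.length = d), Polynomial.X ^ wt M := by
  classical
  have hsupp : (Function.support fun N => PowerSeries.coeff n
      (sPS d N * PowerSeries.invOfUnit (poch d) 1)) ⊆ ↑(Finset.range (2 * d + 1)) := by
    intro N hN
    simp only [Function.mem_support] at hN
    simp only [Finset.coe_range, Set.mem_Iio]
    by_contra h
    push_neg at h
    rw [sPS_zero h, zero_mul, map_zero] at hN
    exact hN rfl
  rw [finsum_eq_sum_of_support_subset _ hsupp]
  have h1 : ∀ N ∈ Finset.range (2 * d + 1),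
      PowerSeries.coeff n (sPS d N * PowerSeries.invOfUnit (poch d) 1)
        = PowerSeries.coeff n (sPS d N * Gd d) := by
    intro N _
    rw [inv_poch_eq]
  rw [Finset.sum_congr rfl h1, ← map_sum, ← Finset.sum_mul, sum_sPS, master]

theorem weighted_generating_function' :
    ∀ n : ℕ,
      (∑ᶠ m : ℕ, Polynomial.C (pDW m n : ℤ) * Polynomial.X ^ m) =
        ∑ᶠ d ∈ Set.Ici 1, ∑ᶠ N : ℕ,
          PowerSeries.coeff n
            (sPS d N * PowerSeries.invOfUnit (poch d) 1) := by
  intro n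
  classical
  set g : ℕ → Polynomial ℤ :=
    fun d => ∑ M ∈ (Afin n).filter (fun M => M.length = d), Polynomial.X ^ wt M with hg
  have hR2 : (∑ᶠ d ∈ Set.Ici 1, ∑ᶠ N : ℕ,
      PowerSeries.coeff n (sPS d N * PowerSeries.invOfUnit (poch d) 1))
        = ∑ M ∈ Afin n, Polynomial.X ^ wt M := by
    rw [finsum_mem_congr rfl (fun d _ => inner_sum_eq n d)]
    have hint : (Set.Ici 1 : Set ℕ) ∩ Function.support g
        = ↑(Finset.Icc 1 n) ∩ Function.support g := by
      ext d
      simp only [Set.mem_inter_iff, Set.mem_Ici, Function.mem_support, Finset.coe_Icc,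
        Set.mem_Icc]
      constructor
      · rintro ⟨h1, h2⟩
        refine ⟨⟨h1, ?_⟩, h2⟩
        rcases Finset.eq_empty_or_nonempty ((Afin n).filter (fun M => M.length = d)) with
          he | ⟨M, hM⟩
        · exfalso
          rw [hg] at h2
          simp only [he, Finset.sum_empty] at h2
          exact h2 rfl
        · rw [Finset.mem_filter, mem_Afin] at hM
          obtain ⟨⟨hE, hsum⟩, hlen⟩ := hM
          have := length_le_sum hE.2.1
          omega
      · rintro ⟨⟨h1, -⟩, h2⟩
        exact ⟨h1, h2⟩
    rw [finsum_mem_eq_sum_of_inter_support_eq g hint]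
    exact Finset.sum_fiberwise_of_maps_to (fun M hM => by
      rw [mem_Afin] at hM
      rw [Finset.mem_Icc]
      have h1 := wt_le_length M
      have h2 := length_le_sum hM.1.2.1
      have h3 : 0 < M.length := List.length_pos_iff.2 hM.1.1
      omega) _
  have hpDW : ∀ m, pDW m n = ((Afin n).filter (fun L => wt L = m)).card := by
    intro m
    rw [pDW]
    have hset : {L : List ℕ | EBP L ∧ L.sum = n ∧ wt L = m}
        = ↑((Afin n).filter (fun L => wt L = m)) := by
      ext L
      simp only [Set.mem_setOf_eq, Finset.coe_filter, mem_Afin]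
      tauto
    rw [hset, Set.ncard_coe_finset]
  have hL : (∑ᶠ m : ℕ, Polynomial.C (pDW m n : ℤ) * Polynomial.X ^ m)
      = ∑ M ∈ Afin n, Polynomial.X ^ wt M := by
    have hsupp : (Function.support fun m => Polynomial.C ((pDW m n : ℤ)) * Polynomial.X ^ m)
        ⊆ ↑(Finset.range (n + 1)) := by
      intro m hm
      simp only [Function.mem_support] at hm
      simp only [Finset.coe_range, Set.mem_Iio]
      by_contra h
      push_neg at h
      have hemp : ((Afin n).filter (fun L => wt L = m)) = ∅ := by
        rw [Finset.eq_empty_iff_forall_notMem]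
        intro L hL
        rw [Finset.mem_filter, mem_Afin] at hL
        obtain ⟨⟨hE, hsum⟩, hwt⟩ := hL
        have h1 := wt_le_length L
        have h2 := length_le_sum hE.2.1
        omega
      rw [hpDW m, hemp] at hm
      simp at hm
    rw [finsum_eq_sum_of_support_subset _ hsupp]
    have h2 : ∀ m ∈ Finset.range (n + 1),
        Polynomial.C ((pDW m n : ℤ)) * Polynomial.X ^ m
          = ∑ L ∈ (Afin n).filter (fun L => wt L = m), Polynomial.X ^ wt L := by
      intro m _
      rw [hpDW, mul_comm, mul_C_card]
      refine Finset.sum_congr rfl (fun L hL => ?_)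
      rw [Finset.mem_filter] at hL
      rw [hL.2]
    rw [Finset.sum_congr rfl h2]
    exact Finset.sum_fiberwise_of_maps_to (fun M hM => by
      rw [mem_Afin] at hM
      rw [Finset.mem_range]
      have h1 := wt_le_length M
      have h2 := length_le_sum hM.1.2.1
      omega) _
  rw [hL]
  exact hR2.symm

end Aux

/-- The generating-function identity
`1 + Σ_{n≥1,m≥0} p_D(m,n) x^m q^n = 1 + Σ_{d≥1} Σ_{N≥0} s(d,N)/(q²;q²)_d`,
stated coefficientwise in `q`. -/
theorem weighted_generating_function :
    ∀ n : ℕ,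
      (∑ᶠ m : ℕ, Polynomial.C (pDW m n : ℤ) * Polynomial.X ^ m) =
        ∑ᶠ d ∈ Set.Ici 1, ∑ᶠ N : ℕ,
          PowerSeries.coeff n
            (sPS d N * PowerSeries.invOfUnit (poch d) 1) :=
  weighted_generating_function'
end
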